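/- arXiv:1402.0243 — 9 statements merged into one kernel-verified Lean document; each statement's English description precedes it below -/
import Mathlib

section
/- Let ρ₁, ρ₂, v₁, v₂, C be strictly positive real numbers, and suppose (ρ₁/ρ₂)·(v₂/v₁) > 1. Set R* = √((ρ₁·v₂)/(ρ₂·v₁)) and N* = C/(ρ₁ + ρ₂·R*). Then the pair (N*, R*) is feasible (N*·ρ₁ + N*·R*·ρ₂ ≤ C, R* ≥ 1, N* > 0) and for every pair of real numbers (N, R) with N > 0, R ≥ 1 and N·ρ₁ + N·R·ρ₂ ≤ C, we have v₁/N* + v₂/(R*·N*) ≤ v₁/N + v₂/(R·N). -/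
/-- **Proposition 2, first case.** If `(ρ₁/ρ₂)·(v₂/v₁) > 1`, then
`R* = √((ρ₁·v₂)/(ρ₂·v₁))`, `N* = C/(ρ₁ + ρ₂·R*)` is feasible and minimizes the
variance `v₁/N + v₂/(R·N)` subject to the budget constraint. -/
theorem prop2_case1 (ρ₁ ρ₂ v₁ v₂ C Rstar Nstar : ℝ)
    (hρ₁ : 0 < ρ₁) (hρ₂ : 0 < ρ₂) (hv₁ : 0 < v₁) (hv₂ : 0 < v₂) (hC : 0 < C)
    (hcond : 1 < ρ₁ / ρ₂ * (v₂ / v₁))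
    (hRstar : Rstar = Real.sqrt (ρ₁ * v₂ / (ρ₂ * v₁)))
    (hNstar : Nstar = C / (ρ₁ + ρ₂ * Rstar)) :
    (Nstar * ρ₁ + Nstar * Rstar * ρ₂ ≤ C ∧ 1 ≤ Rstar ∧ 0 < Nstar) ∧
    ∀ N R : ℝ, 0 < N → 1 ≤ R → N * ρ₁ + N * R * ρ₂ ≤ C →
      v₁ / Nstar + v₂ / (Rstar * Nstar) ≤ v₁ / N + v₂ / (R * N) := by
  have ha : 1 < ρ₁ * v₂ / (ρ₂ * v₁) := by
    have : ρ₁ / ρ₂ * (v₂ / v₁) = ρ₁ * v₂ / (ρ₂ * v₁) := by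
      field_simp
    linarith [this ▸ hcond]
  have ha0 : (0:ℝ) ≤ ρ₁ * v₂ / (ρ₂ * v₁) := by positivity
  have hS1 : 1 < Rstar := by
    rw [hRstar]
    rw [show (1:ℝ) = Real.sqrt 1 by simp]
    exact Real.sqrt_lt_sqrt (by norm_num) ha
  have hS0 : 0 < Rstar := by linarith
  have hS2 : Rstar ^ 2 = ρ₁ * v₂ / (ρ₂ * v₁) := by
    rw [hRstar, Real.sq_sqrt ha0]
  have hkey : v₂ * ρ₁ = v₁ * ρ₂ * Rstar ^ 2 := by
    rw [hS2]; field_simp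
  have hden : 0 < ρ₁ + ρ₂ * Rstar := by positivity
  have hN0 : 0 < Nstar := by rw [hNstar]; positivity
  have hbudget : Nstar * ρ₁ + Nstar * Rstar * ρ₂ = C := by
    rw [hNstar]; field_simp
  refine ⟨⟨le_of_eq hbudget, le_of_lt hS1, hN0⟩, ?_⟩
  intro N R hN hR hbud
  have hR0 : 0 < R := by linarith
  -- objective at the optimum
  have hopt : v₁ / Nstar + v₂ / (Rstar * Nstar)
      = (v₁ + v₂ / Rstar) * (ρ₁ + ρ₂ * Rstar) / C := by
    rw [hNstar]; field_simp
  -- lower bound for the generic objective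
  have h1 : (v₁ + v₂ / R) * (ρ₁ + ρ₂ * R) / C ≤ v₁ / N + v₂ / (R * N) := by
    rw [div_le_iff₀ hC]
    have hNc : N * (ρ₁ + R * ρ₂) ≤ C := by nlinarith
    have hpos : 0 < v₁ + v₂ / R := by positivity
    have : (v₁ + v₂ / R) * (ρ₁ + ρ₂ * R) ≤ (v₁ + v₂ / R) * (C / N) := by
      apply mul_le_mul_of_nonneg_left _ (le_of_lt hpos)
      rw [le_div_iff₀ hN]
      nlinarith
    calc (v₁ + v₂ / R) * (ρ₁ + ρ₂ * R) ≤ (v₁ + v₂ / R) * (C / N) := this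
      _ = (v₁ / N + v₂ / (R * N)) * C := by field_simp
  -- key AM-GM comparison
  have h2 : (v₁ + v₂ / Rstar) * (ρ₁ + ρ₂ * Rstar) ≤ (v₁ + v₂ / R) * (ρ₁ + ρ₂ * R) := by
    have hsq : 0 ≤ (R - Rstar)^2 := sq_nonneg _
    have e1 : (v₁ + v₂ / Rstar) * (ρ₁ + ρ₂ * Rstar) * (R * Rstar)
        ≤ (v₁ + v₂ / R) * (ρ₁ + ρ₂ * R) * (R * Rstar) := by
      have eL : (v₁ + v₂ / Rstar) * (ρ₁ + ρ₂ * Rstar) * (R * Rstar)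
          = (v₁ * ρ₁ + v₂ * ρ₂) * (R * Rstar) + v₁ * ρ₂ * Rstar^2 * R + v₂ * ρ₁ * R := by
        field_simp; ring
      have eR : (v₁ + v₂ / R) * (ρ₁ + ρ₂ * R) * (R * Rstar)
          = (v₁ * ρ₁ + v₂ * ρ₂) * (R * Rstar) + v₁ * ρ₂ * R^2 * Rstar + v₂ * ρ₁ * Rstar := by
        field_simp; ring
      rw [eL, eR, hkey]
      nlinarith [mul_nonneg (mul_nonneg (mul_pos hv₁ hρ₂).le hS0.le) (sq_nonneg (R - Rstar))]
    exact le_of_mul_le_mul_right e1 (by positivity)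
  calc v₁ / Nstar + v₂ / (Rstar * Nstar)
      = (v₁ + v₂ / Rstar) * (ρ₁ + ρ₂ * Rstar) / C := hopt
    _ ≤ (v₁ + v₂ / R) * (ρ₁ + ρ₂ * R) / C := by gcongr
    _ ≤ v₁ / N + v₂ / (R * N) := h1
end

section
/- Let ρ₁, ρ₂, v₁, v₂, C be strictly positive real numbers, and suppose (ρ₁/ρ₂)·(v₂/v₁) ≤ 1. Set N* = C/(ρ₁ + ρ₂). Then for every pair of real numbers (N, R) with N > 0, R ≥ 1 and N·ρ₁ + N·R·ρ₂ ≤ C, we have v₁/N* + v₂/N* ≤ v₁/N + v₂/(R·N); i.e., the constrained minimum is attained at R = 1, N = N*. -/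
/-- **Proposition 2, second case.** If `(ρ₁/ρ₂)·(v₂/v₁) ≤ 1`, then the
budget-constrained minimum of `v₁/N + v₂/(R·N)` is attained at `R = 1`,
`N* = C/(ρ₁ + ρ₂)`. -/
theorem prop2_case2 (ρ₁ ρ₂ v₁ v₂ C Nstar : ℝ)
    (hρ₁ : 0 < ρ₁) (hρ₂ : 0 < ρ₂) (hv₁ : 0 < v₁) (hv₂ : 0 < v₂) (hC : 0 < C)
    (hcond : ρ₁ / ρ₂ * (v₂ / v₁) ≤ 1)
    (hNstar : Nstar = C / (ρ₁ + ρ₂)) :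
    ∀ N R : ℝ, 0 < N → 1 ≤ R → N * ρ₁ + N * R * ρ₂ ≤ C →
      v₁ / Nstar + v₂ / Nstar ≤ v₁ / N + v₂ / (R * N) := by
  intro N R hN hR hbudget
  have hR0 : 0 < R := lt_of_lt_of_le one_pos hR
  have hsum : 0 < ρ₁ + ρ₂ := by linarith
  have hcond' : ρ₁ * v₂ ≤ ρ₂ * v₁ := by
    have := (div_le_one (by positivity : (0:ℝ) < ρ₂ * v₁)).mp
      (by rw [div_mul_div_comm] at hcond; exact hcond)
    linarith
  subst hNstar
  rw [div_div_eq_mul_div, div_div_eq_mul_div, ← add_div]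
  rw [div_le_iff₀ hC]
  have heq : v₁ / N + v₂ / (R * N) = (v₁ * R + v₂) / (R * N) := by
    field_simp
  rw [heq, div_mul_eq_mul_div, le_div_iff₀ (by positivity : (0:ℝ) < R * N)]
  nlinarith [mul_pos hN hR0, mul_nonneg (mul_nonneg hρ₂.le hv₁.le) (mul_nonneg (sub_nonneg.mpr hR) (sub_nonneg.mpr hR)), mul_le_mul_of_nonneg_left hbudget (by positivity : (0:ℝ) ≤ (v₁*R + v₂)), mul_nonneg (sub_nonneg.mpr hR) (sub_nonneg.mpr hcond'), mul_nonneg hN.le (mul_nonneg (sub_nonneg.mpr hR) (sub_nonneg.mpr hcond'))]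
end

section
/- Let ρ₁, ρ₂, v₁, v₂ be strictly positive real numbers with (ρ₁/ρ₂)·(v₂/v₁) > 1. Define V(R) = (ρ₁ + ρ₂·R)·(v₁ + v₂/R) for R > 0 and R* = √((ρ₁·v₂)/(ρ₂·v₁)). Then V(R*)/V(1) = (√(v₁/v₂) + √(ρ₂/ρ₁))² / ((1 + v₁/v₂)·(1 + ρ₂/ρ₁)). -/
/-- **Proposition 3, formula for the relative gain** `γ* = V(R*)/V(1)`. -/
theorem prop3_gain_formula (ρ₁ ρ₂ v₁ v₂ : ℝ)
    (hρ₁ : 0 < ρ₁) (hρ₂ : 0 < ρ₂) (hv₁ : 0 < v₁) (hv₂ : 0 < v₂)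
    (hcond : 1 < ρ₁ / ρ₂ * (v₂ / v₁))
    (V : ℝ → ℝ) (hV : ∀ R : ℝ, 0 < R → V R = (ρ₁ + ρ₂ * R) * (v₁ + v₂ / R))
    (Rstar : ℝ) (hRstar : Rstar = Real.sqrt (ρ₁ * v₂ / (ρ₂ * v₁))) :
    V Rstar / V 1
      = (Real.sqrt (v₁ / v₂) + Real.sqrt (ρ₂ / ρ₁)) ^ 2
        / ((1 + v₁ / v₂) * (1 + ρ₂ / ρ₁)) := by
  set a := Real.sqrt ρ₁ with ha'
  set b := Real.sqrt ρ₂ with hb'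
  set c := Real.sqrt v₁ with hc'
  set d := Real.sqrt v₂ with hd'
  have ha : 0 < a := Real.sqrt_pos.mpr hρ₁
  have hb : 0 < b := Real.sqrt_pos.mpr hρ₂
  have hc : 0 < c := Real.sqrt_pos.mpr hv₁
  have hd : 0 < d := Real.sqrt_pos.mpr hv₂
  have ha2 : a ^ 2 = ρ₁ := Real.sq_sqrt hρ₁.le
  have hb2 : b ^ 2 = ρ₂ := Real.sq_sqrt hρ₂.le
  have hc2 : c ^ 2 = v₁ := Real.sq_sqrt hv₁.le
  have hd2 : d ^ 2 = v₂ := Real.sq_sqrt hv₂.le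
  have hR : Rstar = a * d / (b * c) := by
    rw [hRstar]
    have : ρ₁ * v₂ / (ρ₂ * v₁) = (a * d / (b * c)) ^ 2 := by
      rw [← ha2, ← hb2, ← hc2, ← hd2]; field_simp
    rw [this, Real.sqrt_sq (by positivity)]
  have h1 : Real.sqrt (v₁ / v₂) = c / d := by
    have : v₁ / v₂ = (c / d) ^ 2 := by rw [← hc2, ← hd2]; field_simp
    rw [this, Real.sqrt_sq (by positivity)]
  have h2 : Real.sqrt (ρ₂ / ρ₁) = b / a := by
    have : ρ₂ / ρ₁ = (b / a) ^ 2 := by rw [← ha2, ← hb2]; field_simp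
    rw [this, Real.sqrt_sq (by positivity)]
  have hRpos : 0 < Rstar := by rw [hR]; positivity
  rw [hV Rstar hRpos, hV 1 one_pos, hR, h1, h2, ← ha2, ← hb2, ← hc2, ← hd2]
  have hden : (a ^ 2 + b ^ 2) * (c ^ 2 + d ^ 2) ≠ 0 := by positivity
  field_simp
  ring
end

section
/- Let ρ₁, ρ₂, v₁, v₂ be strictly positive real numbers with (ρ₁/ρ₂)·(v₂/v₁) > 1. Define V(R) = (ρ₁ + ρ₂·R)·(v₁ + v₂/R) for R > 0, R* = √((ρ₁·v₂)/(ρ₂·v₁)), and γ* = V(R*)/V(1). Then max(ρ₂/(ρ₁+ρ₂), v₁/(v₁+v₂)) ≤ γ* ≤ 4·max(ρ₂/(ρ₁+ρ₂), v₁/(v₁+v₂)). -/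
/-- **Proposition 3, two-sided bounds on the gain** `γ* = V(R*)/V(1)`. -/
theorem prop3_gain_bounds (ρ₁ ρ₂ v₁ v₂ : ℝ)
    (hρ₁ : 0 < ρ₁) (hρ₂ : 0 < ρ₂) (hv₁ : 0 < v₁) (hv₂ : 0 < v₂)
    (hcond : 1 < ρ₁ / ρ₂ * (v₂ / v₁))
    (V : ℝ → ℝ) (hV : ∀ R : ℝ, 0 < R → V R = (ρ₁ + ρ₂ * R) * (v₁ + v₂ / R))
    (Rstar γstar : ℝ) (hRstar : Rstar = Real.sqrt (ρ₁ * v₂ / (ρ₂ * v₁)))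
    (hγ : γstar = V Rstar / V 1) :
    max (ρ₂ / (ρ₁ + ρ₂)) (v₁ / (v₁ + v₂)) ≤ γstar ∧
    γstar ≤ 4 * max (ρ₂ / (ρ₁ + ρ₂)) (v₁ / (v₁ + v₂)) := by
  have hcd : ρ₂ * v₁ < ρ₁ * v₂ := by
    rw [div_mul_div_comm] at hcond
    have := (one_lt_div (by positivity : (0:ℝ) < ρ₂ * v₁)).mp hcond
    linarith
  set s : ℝ := Real.sqrt ((ρ₂ * v₁) * (ρ₁ * v₂)) with hs
  have hspos : 0 < s := Real.sqrt_pos.mpr (by positivity)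
  have hs2 : s ^ 2 = (ρ₂ * v₁) * (ρ₁ * v₂) := Real.sq_sqrt (by positivity)
  have hsc : ρ₂ * v₁ ≤ s := by
    nlinarith [hspos, sq_nonneg (s - ρ₂ * v₁)]
  have hsab : 2 * s ≤ ρ₁ * v₁ + ρ₂ * v₂ := by
    have : s ≤ (ρ₁ * v₁ + ρ₂ * v₂) / 2 := by
      calc s ≤ Real.sqrt (((ρ₁ * v₁ + ρ₂ * v₂) / 2) ^ 2) :=
            Real.sqrt_le_sqrt (by nlinarith [sq_nonneg (ρ₁ * v₁ - ρ₂ * v₂)])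
        _ = (ρ₁ * v₁ + ρ₂ * v₂) / 2 := Real.sqrt_sq (by positivity)
    linarith
  have hRpos : 0 < Rstar := by
    rw [hRstar]; exact Real.sqrt_pos.mpr (by positivity)
  have h1 : (ρ₂ * v₁) * Rstar = s := by
    rw [hRstar, hs, ← Real.sqrt_sq (by positivity : (0:ℝ) ≤ ρ₂ * v₁),
      ← Real.sqrt_mul (by positivity)]
    congr 1
    field_simp
    ring_nf
    rw [Real.sq_sqrt (by positivity)]
  have h2 : (ρ₁ * v₂) / Rstar = s := by
    rw [div_eq_iff (ne_of_gt hRpos)]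
    have hR2 : Rstar ^ 2 = ρ₁ * v₂ / (ρ₂ * v₁) := by
      rw [hRstar]; exact Real.sq_sqrt (by positivity)
    have hR2' : (ρ₂ * v₁) * Rstar ^ 2 = ρ₁ * v₂ := by
      rw [hR2]; field_simp
    nlinarith [h1, hR2']
  have hVR : V Rstar = ρ₁ * v₁ + ρ₂ * v₂ + 2 * s := by
    rw [hV Rstar hRpos]
    have expand : (ρ₁ + ρ₂ * Rstar) * (v₁ + v₂ / Rstar)
        = ρ₁ * v₁ + ρ₂ * v₂ + (ρ₂ * v₁) * Rstar + (ρ₁ * v₂) / Rstar := by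
      field_simp
      ring
    rw [expand, h1, h2]
    ring
  have hV1 : V 1 = (ρ₁ + ρ₂) * (v₁ + v₂) := by
    rw [hV 1 one_pos]; norm_num
  have hDpos : 0 < (ρ₁ + ρ₂) * (v₁ + v₂) := by positivity
  have hγ' : γstar = (ρ₁ * v₁ + ρ₂ * v₂ + 2 * s) / ((ρ₁ + ρ₂) * (v₁ + v₂)) := by
    rw [hγ, hVR, hV1]
  have key1 : ρ₂ * (v₁ + v₂) ≤ ρ₁ * v₁ + ρ₂ * v₂ + 2 * s := by nlinarith
  have key2 : v₁ * (ρ₁ + ρ₂) ≤ ρ₁ * v₁ + ρ₂ * v₂ + 2 * s := by nlinarith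
  constructor
  · apply max_le
    · rw [hγ', div_le_div_iff₀ (by positivity) hDpos]
      nlinarith [mul_le_mul_of_nonneg_right key1 (le_of_lt (by positivity : (0:ℝ) < ρ₁ + ρ₂))]
    · rw [hγ', div_le_div_iff₀ (by positivity) hDpos]
      nlinarith [mul_le_mul_of_nonneg_right key2 (le_of_lt (by positivity : (0:ℝ) < v₁ + v₂))]
  · have hM1 : ρ₂ / (ρ₁ + ρ₂) ≤ max (ρ₂ / (ρ₁ + ρ₂)) (v₁ / (v₁ + v₂)) := le_max_left _ _
    have hM2 : v₁ / (v₁ + v₂) ≤ max (ρ₂ / (ρ₁ + ρ₂)) (v₁ / (v₁ + v₂)) := le_max_right _ _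
    have e1 : ρ₂ * (v₁ + v₂) ≤ max (ρ₂ / (ρ₁ + ρ₂)) (v₁ / (v₁ + v₂)) * ((ρ₁ + ρ₂) * (v₁ + v₂)) := by
      calc ρ₂ * (v₁ + v₂) = ρ₂ / (ρ₁ + ρ₂) * ((ρ₁ + ρ₂) * (v₁ + v₂)) := by
            field_simp
        _ ≤ _ := mul_le_mul_of_nonneg_right hM1 hDpos.le
    have e2 : v₁ * (ρ₁ + ρ₂) ≤ max (ρ₂ / (ρ₁ + ρ₂)) (v₁ / (v₁ + v₂)) * ((ρ₁ + ρ₂) * (v₁ + v₂)) := by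
      calc v₁ * (ρ₁ + ρ₂) = v₁ / (v₁ + v₂) * ((ρ₁ + ρ₂) * (v₁ + v₂)) := by
            field_simp
        _ ≤ _ := mul_le_mul_of_nonneg_right hM2 hDpos.le
    rw [hγ', div_le_iff₀ hDpos]
    linarith [hsab, e1, e2, mul_pos hρ₂ hv₁]
end

section
/- Let ρ₁, ρ₂, v₁, v₂ be strictly positive real numbers. Define V(R) = (ρ₁ + ρ₂·R)·(v₁ + v₂/R) for R > 0 and R* = √((ρ₁·v₂)/(ρ₂·v₁)). Suppose R* > 1 and let α > 1 and R be real numbers with α⁻¹·R* ≤ R ≤ α·R*. Then V(R)/V(R*) ≤ 1/2 + (α + α⁻¹)/4, and consequently V(R)/V(1) ≤ (1/2 + (α + α⁻¹)/4)·(V(R*)/V(1)). -/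
/-- **Proposition 4 (robustness to misspecification of R).** If
`α⁻¹·R* ≤ R ≤ α·R*`, then `V(R)/V(R*) ≤ 1/2 + (α + α⁻¹)/4`, and consequently
`V(R)/V(1) ≤ (1/2 + (α + α⁻¹)/4)·(V(R*)/V(1))`. -/
theorem prop4_robustness (ρ₁ ρ₂ v₁ v₂ : ℝ)
    (hρ₁ : 0 < ρ₁) (hρ₂ : 0 < ρ₂) (hv₁ : 0 < v₁) (hv₂ : 0 < v₂)
    (V : ℝ → ℝ) (hV : ∀ R : ℝ, 0 < R → V R = (ρ₁ + ρ₂ * R) * (v₁ + v₂ / R))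
    (Rstar : ℝ) (hRstar : Rstar = Real.sqrt (ρ₁ * v₂ / (ρ₂ * v₁)))
    (hRstar1 : 1 < Rstar)
    (α R : ℝ) (hα : 1 < α) (hlow : α⁻¹ * Rstar ≤ R) (hhigh : R ≤ α * Rstar) :
    V R / V Rstar ≤ 1 / 2 + (α + α⁻¹) / 4 ∧
    V R / V 1 ≤ (1 / 2 + (α + α⁻¹) / 4) * (V Rstar / V 1) := by
  have hα0 : (0:ℝ) < α := lt_trans one_pos hα
  have hRs0 : (0:ℝ) < Rstar := lt_trans one_pos hRstar1
  have hR0 : (0:ℝ) < R := lt_of_lt_of_le (by positivity) hlow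
  have hαinv : α * α⁻¹ = 1 := mul_inv_cancel₀ hα0.ne'
  -- key identity: ρ₂ v₁ Rstar² = ρ₁ v₂
  have hsq : ρ₂ * v₁ * Rstar ^ 2 = ρ₁ * v₂ := by
    have h1 : Rstar ^ 2 = ρ₁ * v₂ / (ρ₂ * v₁) := by
      rw [hRstar, sq, Real.mul_self_sqrt (by positivity)]
    rw [h1]
    field_simp
  have hK2 : 2 ≤ α + α⁻¹ := by nlinarith [sq_nonneg (α - 1)]
  -- V Rstar = c + 2 ρ₂ v₁ Rstar
  have hVRs : V Rstar = (ρ₁ * v₁ + ρ₂ * v₂) + 2 * (ρ₂ * v₁) * Rstar := by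
    rw [hV Rstar hRs0]
    field_simp
    linear_combination -hsq
  -- AM-GM: c ≥ 2 ρ₂ v₁ Rstar
  have hcge : 2 * (ρ₂ * v₁) * Rstar ≤ ρ₁ * v₁ + ρ₂ * v₂ := by
    have ht : (ρ₂ * v₁ * Rstar) ^ 2 = (ρ₁ * v₁) * (ρ₂ * v₂) := by
      linear_combination (ρ₂ * v₁) * hsq
    nlinarith [ht, sq_nonneg (ρ₁ * v₁ - ρ₂ * v₂),
      mul_pos (mul_pos hρ₂ hv₁) hRs0, mul_pos hρ₁ hv₁, mul_pos hρ₂ hv₂,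
      sq_nonneg (ρ₁ * v₁ + ρ₂ * v₂ - 2 * (ρ₂ * v₁ * Rstar))]
  have hVRs_pos : 0 < V Rstar := by
    rw [hVRs]; positivity
  -- bound on V R
  have hbound : V R ≤ (ρ₁ * v₁ + ρ₂ * v₂) + (ρ₂ * v₁) * (α + α⁻¹) * Rstar := by
    rw [hV R hR0]
    have key : R ^ 2 + Rstar ^ 2 ≤ (α + α⁻¹) * Rstar * R := by
      have h := mul_nonneg (sub_nonneg.mpr hhigh) (sub_nonneg.mpr hlow)
      have h3 : α * α⁻¹ * Rstar ^ 2 = Rstar ^ 2 := by rw [hαinv, one_mul]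
      nlinarith [h, h3]
    have hexp : (ρ₁ + ρ₂ * R) * (v₁ + v₂ / R) =
        (ρ₁ * v₁ + ρ₂ * v₂) + (ρ₂ * v₁) * ((R ^ 2 + Rstar ^ 2) / R) := by
      field_simp
      linear_combination -hsq
    rw [hexp]
    have h4 : (R ^ 2 + Rstar ^ 2) / R ≤ (α + α⁻¹) * Rstar := by
      rw [div_le_iff₀ hR0]; linarith [key]
    nlinarith [mul_pos hρ₂ hv₁, h4]
  have hmain : V R ≤ (1 / 2 + (α + α⁻¹) / 4) * V Rstar := by
    rw [hVRs]
    have h1 : 0 ≤ ((α + α⁻¹) - 2) * ((ρ₁ * v₁ + ρ₂ * v₂) - 2 * (ρ₂ * v₁) * Rstar) :=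
      mul_nonneg (by linarith) (by linarith)
    nlinarith [hbound, h1]
  constructor
  · rw [div_le_iff₀ hVRs_pos]; exact hmain
  · have hV1 : 0 < V 1 := by
      rw [hV 1 one_pos]; positivity
    have h5 : V R / V 1 ≤ ((1 / 2 + (α + α⁻¹) / 4) * V Rstar) / V 1 :=
      div_le_div_of_nonneg_right hmain hV1.le
    rw [mul_div_assoc] at h5
    exact h5
end

section
/- Let ρ₁, ρ₂, v₁, v₂ be strictly positive real numbers. Define V(R) = (ρ₁ + ρ₂·R)·(v₁ + v₂/R) for R > 0 and R* = √((ρ₁·v₂)/(ρ₂·v₁)), and suppose R* > 1. Then for every real R with 1 < R < (R*)², one has V(R) < V(1). -/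
/-- **Corollary 5(i).** If `R* > 1`, then every `R` with `1 < R < (R*)²`
improves on simple Monte Carlo: `V(R) < V(1)`. -/
theorem cor5_i (ρ₁ ρ₂ v₁ v₂ : ℝ)
    (hρ₁ : 0 < ρ₁) (hρ₂ : 0 < ρ₂) (hv₁ : 0 < v₁) (hv₂ : 0 < v₂)
    (V : ℝ → ℝ) (hV : ∀ R : ℝ, 0 < R → V R = (ρ₁ + ρ₂ * R) * (v₁ + v₂ / R))
    (Rstar : ℝ) (hRstar : Rstar = Real.sqrt (ρ₁ * v₂ / (ρ₂ * v₁)))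
    (hRstar1 : 1 < Rstar) :
    ∀ R : ℝ, 1 < R → R < Rstar ^ 2 → V R < V 1 := by
  intro R h1 h2
  have hR : 0 < R := lt_trans one_pos h1
  have hsq : Rstar ^ 2 = ρ₁ * v₂ / (ρ₂ * v₁) := by
    rw [hRstar, Real.sq_sqrt]
    positivity
  rw [hV R hR, hV 1 one_pos]
  have key : R * (ρ₂ * v₁) < ρ₁ * v₂ := by
    rw [hsq, lt_div_iff₀ (by positivity)] at h2
    linarith
  have hRne : R ≠ 0 := ne_of_gt hR
  field_simp
  nlinarith [mul_pos (sub_pos.mpr h1) (sub_pos.mpr key)]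
end

section
/- Let ρ₁, ρ₂, v₁, v₂ be strictly positive real numbers. Define V(R) = (ρ₁ + ρ₂·R)·(v₁ + v₂/R) for R > 0 and R* = √((ρ₁·v₂)/(ρ₂·v₁)), and suppose R* > 1. Then for every real r > 0 with R* − r ≥ 1, one has V(R* + r) < V(R* − r). -/
/-- **Corollary 5(ii).** If `R* > 1` and `r > 0` with `R* − r ≥ 1`, then
`V(R* + r) < V(R* − r)`. -/
theorem cor5_ii (ρ₁ ρ₂ v₁ v₂ : ℝ)
    (hρ₁ : 0 < ρ₁) (hρ₂ : 0 < ρ₂) (hv₁ : 0 < v₁) (hv₂ : 0 < v₂)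
    (V : ℝ → ℝ) (hV : ∀ R : ℝ, 0 < R → V R = (ρ₁ + ρ₂ * R) * (v₁ + v₂ / R))
    (Rstar : ℝ) (hRstar : Rstar = Real.sqrt (ρ₁ * v₂ / (ρ₂ * v₁)))
    (hRstar1 : 1 < Rstar) :
    ∀ r : ℝ, 0 < r → 1 ≤ Rstar - r → V (Rstar + r) < V (Rstar - r) := by
  intro r hr hb1
  have hb : 0 < Rstar - r := lt_of_lt_of_le one_pos hb1
  have ha : 0 < Rstar + r := by linarith
  have hsq : Rstar ^ 2 = ρ₁ * v₂ / (ρ₂ * v₁) := by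
    rw [hRstar, Real.sq_sqrt]
    positivity
  have hsq' : Rstar ^ 2 * (ρ₂ * v₁) = ρ₁ * v₂ := by
    rw [hsq]; field_simp
  rw [hV _ ha, hV _ hb]
  have e1 : v₁ + v₂ / (Rstar + r) = (v₁ * (Rstar + r) + v₂) / (Rstar + r) := by
    field_simp
  have e2 : v₁ + v₂ / (Rstar - r) = (v₁ * (Rstar - r) + v₂) / (Rstar - r) := by
    field_simp
  rw [e1, e2, ← mul_div_assoc, ← mul_div_assoc, div_lt_div_iff₀ ha hb]
  nlinarith [mul_pos hr hr, mul_pos hρ₂ hv₁, mul_pos (mul_pos hr hr) (mul_pos hρ₂ hv₁), mul_pos hr (mul_pos hρ₂ hv₁)]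
end

section
/- Let ρ₁, ρ₂, v₁, v₂ be strictly positive real numbers. Define V(R) = (ρ₁ + ρ₂·R)·(v₁ + v₂/R) for R > 0 and R* = √((ρ₁·v₂)/(ρ₂·v₁)), and suppose R* > 1. Let R# be the integer nearest to R* (rounding to the nearest integer). If R# > 1, then V(R#) < V(1). -/
/-- **Corollary 5(iii).** If `R* > 1` and the integer `R#` nearest to `R*`
satisfies `R# > 1`, then `V(R#) < V(1)`. -/
theorem cor5_iii (ρ₁ ρ₂ v₁ v₂ : ℝ)
    (hρ₁ : 0 < ρ₁) (hρ₂ : 0 < ρ₂) (hv₁ : 0 < v₁) (hv₂ : 0 < v₂)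
    (V : ℝ → ℝ) (hV : ∀ R : ℝ, 0 < R → V R = (ρ₁ + ρ₂ * R) * (v₁ + v₂ / R))
    (Rstar : ℝ) (hRstar : Rstar = Real.sqrt (ρ₁ * v₂ / (ρ₂ * v₁)))
    (hRstar1 : 1 < Rstar)
    (Rsharp : ℤ) (hRsharp : Rsharp = round Rstar) (hRsharp1 : 1 < Rsharp) :
    V (Rsharp : ℝ) < V 1 := by
  set R : ℝ := (Rsharp : ℝ) with hR
  have hR1 : (1 : ℝ) < R := by rw [hR]; exact_mod_cast hRsharp1
  have hR0 : (0 : ℝ) < R := by linarith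
  -- R* ≥ 3/2
  have h2 : (2 : ℤ) ≤ round Rstar := by omega
  have hge : (3/2 : ℝ) ≤ Rstar := by
    rw [round_eq] at h2
    have := Int.le_floor.mp h2
    push_cast at this
    linarith
  -- R ≤ R* + 1/2
  have habs : |Rstar - R| ≤ 1/2 := by
    rw [hR, hRsharp]; exact abs_sub_round Rstar
  have hle : R ≤ Rstar + 1/2 := by
    have := abs_le.mp habs; linarith
  -- R*² = ρ₁v₂/(ρ₂v₁)
  have hb0 : (0 : ℝ) < ρ₂ * v₁ := by positivity
  have hsq : Rstar ^ 2 = ρ₁ * v₂ / (ρ₂ * v₁) := by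
    rw [hRstar, Real.sq_sqrt (by positivity)]
  have hkey : ρ₂ * v₁ * Rstar ^ 2 = ρ₁ * v₂ := by
    field_simp at hsq; linarith [hsq]
  -- R < R*²
  have hRlt : R < Rstar ^ 2 := by nlinarith
  have h : (ρ₁ + ρ₂ * R) * (v₁ * R + v₂) < (ρ₁ + ρ₂ * 1) * (v₁ + v₂ / 1) * R := by
    have hpos : 0 < ρ₂ * v₁ * ((R - 1) * (Rstar ^ 2 - R)) := by
      apply mul_pos hb0
      exact mul_pos (by linarith) (by linarith)
    nlinarith [hpos, hkey]
  rw [hV R hR0, hV 1 one_pos]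
  have heq : (ρ₁ + ρ₂ * R) * (v₁ + v₂ / R) = (ρ₁ + ρ₂ * R) * (v₁ * R + v₂) / R := by
    field_simp
  rw [heq, div_lt_iff₀ hR0]
  exact h
end

section
/- Let ρ₁, ρ₂, v₁, v₂ be strictly positive real numbers. Define V(R) = (ρ₁ + ρ₂·R)·(v₁ + v₂/R) for R > 0, R* = √((ρ₁·v₂)/(ρ₂·v₁)), and Γ = (ρ₁·v₁ + ρ₂·v₂)/(ρ₂·v₁·R*). Then for every real α > 0, V(α·R*)/V(R*) = (Γ + α + α⁻¹)/(Γ + 2); moreover Γ = √((ρ₂·v₂)/(ρ₁·v₁)) + √((ρ₁·v₁)/(ρ₂·v₂)), and hence Γ ≥ 2. -/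
set_option maxHeartbeats 1600000 in
/-- The computational core of the proof of Proposition 4:
`V(α·R*)/V(R*) = (Γ + α + α⁻¹)/(Γ + 2)` with
`Γ = (ρ₁v₁ + ρ₂v₂)/(ρ₂v₁R*) = √(ρ₂v₂/(ρ₁v₁)) + √(ρ₁v₁/(ρ₂v₂)) ≥ 2`. -/
theorem prop4_core (ρ₁ ρ₂ v₁ v₂ : ℝ)
    (hρ₁ : 0 < ρ₁) (hρ₂ : 0 < ρ₂) (hv₁ : 0 < v₁) (hv₂ : 0 < v₂)
    (V : ℝ → ℝ) (hV : ∀ R : ℝ, 0 < R → V R = (ρ₁ + ρ₂ * R) * (v₁ + v₂ / R))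
    (Rstar : ℝ) (hRstar : Rstar = Real.sqrt (ρ₁ * v₂ / (ρ₂ * v₁)))
    (Γ : ℝ) (hΓ : Γ = (ρ₁ * v₁ + ρ₂ * v₂) / (ρ₂ * v₁ * Rstar)) :
    (∀ α : ℝ, 0 < α → V (α * Rstar) / V Rstar = (Γ + α + α⁻¹) / (Γ + 2)) ∧
    Γ = Real.sqrt (ρ₂ * v₂ / (ρ₁ * v₁)) + Real.sqrt (ρ₁ * v₁ / (ρ₂ * v₂)) ∧
    2 ≤ Γ := by
  have hq : 0 < ρ₁ * v₂ / (ρ₂ * v₁) := by positivity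
  have hs : 0 < Rstar := by rw [hRstar]; exact Real.sqrt_pos.mpr hq
  have hs2 : Rstar ^ 2 = ρ₁ * v₂ / (ρ₂ * v₁) := by
    rw [hRstar, Real.sq_sqrt hq.le]
  have hkey : ρ₂ * v₁ * Rstar ^ 2 = ρ₁ * v₂ := by
    rw [hs2]; exact mul_div_cancel₀ _ (by positivity : ρ₂ * v₁ ≠ 0)
  set S : ℝ := ρ₁ * v₁ + ρ₂ * v₂ with hS
  set D : ℝ := ρ₂ * v₁ * Rstar with hD
  have hDpos : 0 < D := by positivity
  have hSpos : 0 < S := by positivity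
  -- V at a positive multiple of Rstar
  have hVc : ∀ α : ℝ, 0 < α → V (α * Rstar) = S + D * (α + α⁻¹) := by
    intro α hα
    rw [hV _ (by positivity)]
    have hα' : α ≠ 0 := ne_of_gt hα
    have hs' : Rstar ≠ 0 := ne_of_gt hs
    field_simp [hS, hD]
    nlinarith [hkey, mul_pos hα hs]
  -- Γ formula via a = √(ρ₁v₁), b = √(ρ₂v₂)
  set a : ℝ := Real.sqrt (ρ₁ * v₁) with ha
  set b : ℝ := Real.sqrt (ρ₂ * v₂) with hb
  have hapos : 0 < a := Real.sqrt_pos.mpr (by positivity)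
  have hbpos : 0 < b := Real.sqrt_pos.mpr (by positivity)
  have ha2 : a ^ 2 = ρ₁ * v₁ := Real.sq_sqrt (by positivity)
  have hb2 : b ^ 2 = ρ₂ * v₂ := Real.sq_sqrt (by positivity)
  clear_value S D a b
  have hDab : D = a * b := by
    have h1 : D ^ 2 = (a * b) ^ 2 := by
      rw [hD]; linear_combination (ρ₂ * v₁) * hkey - b ^ 2 * ha2 - (ρ₁ * v₁) * hb2
    nlinarith [mul_pos hapos hbpos, hDpos, h1]
  have hΓab : Γ = b / a + a / b := by
    rw [hΓ, hDab, hS]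
    field_simp
    nlinarith [ha2, hb2]
  have hΓ2 : Γ = Real.sqrt (ρ₂ * v₂ / (ρ₁ * v₁)) + Real.sqrt (ρ₁ * v₁ / (ρ₂ * v₂)) := by
    rw [Real.sqrt_div (by positivity : (0:ℝ) ≤ ρ₂ * v₂),
        Real.sqrt_div (by positivity : (0:ℝ) ≤ ρ₁ * v₁), ← ha, ← hb, hΓab]
  have hΓge : 2 ≤ Γ := by
    rw [hΓab]
    rw [div_add_div _ _ (ne_of_gt hapos) (ne_of_gt hbpos), le_div_iff₀ (by positivity)]
    nlinarith [sq_nonneg (a - b)]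
  refine ⟨?_, hΓ2, hΓge⟩
  intro α hα
  have hVα := hVc α hα
  have hV1 : V Rstar = S + 2 * D := by
    have h := hVc 1 one_pos
    simp at h
    linarith
  rw [hVα, hV1, hΓ]
  have hd1 : 0 < S + 2 * D := by linarith
  have hd2 : 0 < S / D + 2 := by
    have := div_pos hSpos hDpos; linarith
  rw [div_eq_div_iff hd1.ne' hd2.ne']
  field_simp
  ring
end
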